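/- arXiv:2108.03282 — 2 statements merged into one kernel-verified Lean document; each statement's English description precedes it below -/
import Mathlib

section
/- For all real numbers a, b, c there exist real numbers α, β, γ such that, as 4×4 complex matrices, exp(−i·a·(X ⊗ X)) · exp(−i·b·(Z ⊗ I)) · exp(−i·c·(X ⊗ X)) = exp(−i·α·(Z ⊗ I)) · exp(−i·β·(X ⊗ X)) · exp(−i·γ·(Z ⊗ I)), where exp denotes the matrix exponential. This is the turnover property for the blocks of the transverse field Ising model. -/
open Matrix
open scoped Kronecker

set_option maxHeartbeats 1000000

noncomputable section

/-- The Pauli matrix `X`. -/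
def PauliX : Matrix (Fin 2) (Fin 2) ℂ := !![0, 1; 1, 0]

/-- The Pauli matrix `Z`. -/
def PauliZ : Matrix (Fin 2) (Fin 2) ℂ := !![1, 0; 0, -1]

/-- The 2×2 identity matrix. -/
def I2 : Matrix (Fin 2) (Fin 2) ℂ := 1

/-- `expm A` is the matrix exponential of a 4×4 complex matrix. -/
def expm (A : Matrix (Fin 2 × Fin 2) (Fin 2 × Fin 2) ℂ) :
    Matrix (Fin 2 × Fin 2) (Fin 2 × Fin 2) ℂ :=
  NormedSpace.exp A

/-! ### Auxiliary lemmas -/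

lemma tfim_I_cubed : Complex.I ^ 3 = -Complex.I := by
  rw [pow_succ, Complex.I_sq]; ring

/-- Closed form of the exponential of an involutory matrix. -/
lemma tfim_exp_involution (M : Matrix (Fin 2 × Fin 2) (Fin 2 × Fin 2) ℂ)
    (hM : M * M = 1) (θ : ℂ) :
    expm ((-Complex.I * θ) • M)
      = Complex.cos θ • (1 : Matrix (Fin 2 × Fin 2) (Fin 2 × Fin 2) ℂ)
        + (-Complex.I * Complex.sin θ) • M := by
  letI : SeminormedRing (Matrix (Fin 2 × Fin 2) (Fin 2 × Fin 2) ℂ) :=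
    Matrix.linftyOpSemiNormedRing
  letI : NormedRing (Matrix (Fin 2 × Fin 2) (Fin 2 × Fin 2) ℂ) := Matrix.linftyOpNormedRing
  letI : NormedAlgebra ℂ (Matrix (Fin 2 × Fin 2) (Fin 2 × Fin 2) ℂ) :=
    Matrix.linftyOpNormedAlgebra
  have hM2 : ∀ k : ℕ, M ^ (2 * k) = 1 := fun k => by
    rw [pow_mul, sq, hM, one_pow]
  have hcoef_even : ∀ k : ℕ, ((-Complex.I * θ) ^ (2 * k)) = (-1) ^ k * θ ^ (2 * k) := by
    intro k
    rw [pow_mul, pow_mul]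
    have : (-Complex.I * θ) ^ 2 = -(θ ^ 2) := by
      rw [mul_pow]; norm_num [Complex.I_sq]
    rw [this, neg_pow]
  rw [expm, NormedSpace.exp_eq_tsum ℂ]
  refine HasSum.tsum_eq ?_
  have heven : HasSum (fun k : ℕ => ((2 * k).factorial : ℂ)⁻¹ • ((-Complex.I * θ) • M) ^ (2 * k))
      (Complex.cos θ • (1 : Matrix (Fin 2 × Fin 2) (Fin 2 × Fin 2) ℂ)) := by
    have h := (Complex.hasSum_cos θ).smul_const
      (1 : Matrix (Fin 2 × Fin 2) (Fin 2 × Fin 2) ℂ)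
    convert h using 2 with k
    rw [smul_pow, hM2, smul_smul, hcoef_even]
    congr 1
    rw [div_eq_mul_inv]
    ring
  have hodd : HasSum
      (fun k : ℕ => ((2 * k + 1).factorial : ℂ)⁻¹ • ((-Complex.I * θ) • M) ^ (2 * k + 1))
      ((-Complex.I * Complex.sin θ) • M) := by
    have h := ((Complex.hasSum_sin θ).mul_left (-Complex.I)).smul_const M
    convert h using 2 with k
    rw [smul_pow, smul_smul, pow_succ M, hM2, one_mul, pow_succ, hcoef_even]
    congr 1
    rw [div_eq_mul_inv]
    ring
  exact heven.even_add_odd hodd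

/-- Expansion of a triple product in the algebra generated by two anticommuting involutions. -/
lemma tfim_expand3 (A B : Matrix (Fin 2 × Fin 2) (Fin 2 × Fin 2) ℂ)
    (hA : A * A = 1) (hBA : B * A = -(A * B)) (p q r s t u : ℂ) :
    (p • (1 : Matrix (Fin 2 × Fin 2) (Fin 2 × Fin 2) ℂ) + q • A)
        * (r • (1 : Matrix (Fin 2 × Fin 2) (Fin 2 × Fin 2) ℂ) + s • B)
        * (t • (1 : Matrix (Fin 2 × Fin 2) (Fin 2 × Fin 2) ℂ) + u • A)
      = (p*r*t + q*r*u) • (1 : Matrix (Fin 2 × Fin 2) (Fin 2 × Fin 2) ℂ)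
        + (p*r*u + q*r*t) • A + (p*s*t - q*s*u) • B + (q*s*t - p*s*u) • (A*B) := by
  have hABA : A * B * A = -B := by
    rw [mul_assoc, hBA, mul_neg, ← mul_assoc, hA, one_mul]
  simp only [add_mul, mul_add, Matrix.smul_mul, Matrix.mul_smul, smul_smul, mul_one, one_mul,
    hA, hABA, hBA]
  module

/-- Existence of a polar angle. -/
lemma tfim_polar (u v : ℝ) :
    ∃ θ : ℝ, Real.sqrt (u^2+v^2) * Real.cos θ = u ∧ Real.sqrt (u^2+v^2) * Real.sin θ = v := by
  rcases eq_or_ne (u^2+v^2) 0 with h | h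
  · have hu : u = 0 := by nlinarith [sq_nonneg u, sq_nonneg v]
    have hv : v = 0 := by nlinarith [sq_nonneg u, sq_nonneg v]
    exact ⟨0, by simp [hu, hv]⟩
  · set z : ℂ := ⟨u, v⟩ with hz
    have hz0 : z ≠ 0 := by
      intro hzz
      apply h
      rw [Complex.ext_iff] at hzz
      simp only [hz, Complex.zero_re, Complex.zero_im] at hzz
      obtain ⟨h1, h2⟩ := hzz
      simp [h1, h2]
    have habs : ‖z‖ = Real.sqrt (u^2+v^2) := by
      rw [Complex.norm_def, Complex.normSq_mk]
      congr 1
      ring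
    have habs0 : ‖z‖ ≠ 0 := norm_ne_zero_iff.mpr hz0
    refine ⟨Complex.arg z, ?_, ?_⟩
    · rw [← habs, Complex.cos_arg hz0]
      field_simp
      rfl
    · rw [← habs, Complex.sin_arg]
      field_simp
      rfl

/-- Existence of the Euler-type angles. -/
lemma tfim_angles (a b c : ℝ) : ∃ α β γ : ℝ,
    Real.cos β * Real.cos (α+γ) = Real.cos b * Real.cos (a+c) ∧
    Real.sin β * Real.cos (α-γ) = Real.cos b * Real.sin (a+c) ∧
    Real.cos β * Real.sin (α+γ) = Real.sin b * Real.cos (a-c) ∧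
    Real.sin β * Real.sin (α-γ) = -(Real.sin b * Real.sin (a-c)) := by
  set w := Real.cos b * Real.cos (a+c) with hw
  set y := Real.sin b * Real.cos (a-c) with hy
  set x := Real.cos b * Real.sin (a+c) with hx
  set z := -(Real.sin b * Real.sin (a-c)) with hzz
  have hsum : w^2 + y^2 + (x^2 + z^2) = 1 := by
    have h1 := Real.sin_sq_add_cos_sq b
    have h2 := Real.sin_sq_add_cos_sq (a+c)
    have h3 := Real.sin_sq_add_cos_sq (a-c)
    have e : w^2 + y^2 + (x^2 + z^2)
        = Real.cos b^2 * (Real.sin (a+c)^2 + Real.cos (a+c)^2)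
          + Real.sin b^2 * (Real.sin (a-c)^2 + Real.cos (a-c)^2) := by
      rw [hw, hx, hy, hzz]; ring
    rw [e, h2, h3]
    linarith
  obtain ⟨θ₁, h1c, h1s⟩ := tfim_polar w y
  obtain ⟨θ₂, h2c, h2s⟩ := tfim_polar x z
  set r1 := Real.sqrt (w^2+y^2) with hr1
  set r2 := Real.sqrt (x^2+z^2) with hr2
  have hr1nonneg : 0 ≤ r1 := Real.sqrt_nonneg _
  have hr1le : r1 ≤ 1 := by
    rw [hr1]
    rw [show (1:ℝ) = Real.sqrt 1 by simp]
    apply Real.sqrt_le_sqrt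
    nlinarith [sq_nonneg x, sq_nonneg z]
  have hcosβ : Real.cos (Real.arccos r1) = r1 :=
    Real.cos_arccos (by linarith) hr1le
  have hsinβ : Real.sin (Real.arccos r1) = r2 := by
    rw [Real.sin_arccos, hr2]
    congr 1
    rw [Real.sq_sqrt (by nlinarith [sq_nonneg w, sq_nonneg y] : (0:ℝ) ≤ w^2+y^2)]
    linarith
  refine ⟨(θ₁+θ₂)/2, Real.arccos r1, (θ₁-θ₂)/2, ?_, ?_, ?_, ?_⟩
  · rw [hcosβ, show (θ₁+θ₂)/2 + (θ₁-θ₂)/2 = θ₁ by ring]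
    exact h1c
  · rw [hsinβ, show (θ₁+θ₂)/2 - (θ₁-θ₂)/2 = θ₂ by ring]
    exact h2c
  · rw [hcosβ, show (θ₁+θ₂)/2 + (θ₁-θ₂)/2 = θ₁ by ring]
    exact h1s
  · rw [hsinβ, show (θ₁+θ₂)/2 - (θ₁-θ₂)/2 = θ₂ by ring]
    exact h2s

lemma tfim_XX_mul_XX : (PauliX ⊗ₖ PauliX) * (PauliX ⊗ₖ PauliX) = 1 := by
  ext ⟨i,j⟩ ⟨k,l⟩
  fin_cases i <;> fin_cases j <;> fin_cases k <;> fin_cases l <;>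
    simp [PauliX, Matrix.mul_apply, Fintype.sum_prod_type, Fin.sum_univ_two, Matrix.one_apply,
      Prod.ext_iff]

lemma tfim_ZI_mul_ZI : (PauliZ ⊗ₖ I2) * (PauliZ ⊗ₖ I2) = 1 := by
  ext ⟨i,j⟩ ⟨k,l⟩
  fin_cases i <;> fin_cases j <;> fin_cases k <;> fin_cases l <;>
    simp [PauliZ, I2, Matrix.mul_apply, Fintype.sum_prod_type, Fin.sum_univ_two,
      Matrix.one_apply, Prod.ext_iff]

lemma tfim_ZI_mul_XX : (PauliZ ⊗ₖ I2) * (PauliX ⊗ₖ PauliX)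
    = -((PauliX ⊗ₖ PauliX) * (PauliZ ⊗ₖ I2)) := by
  ext ⟨i,j⟩ ⟨k,l⟩
  fin_cases i <;> fin_cases j <;> fin_cases k <;> fin_cases l <;>
    simp [PauliZ, PauliX, I2, Matrix.mul_apply, Fintype.sum_prod_type, Fin.sum_univ_two,
      Matrix.one_apply, Prod.ext_iff]

/-- **Turnover property for the transverse field Ising model blocks.**
For all real `a, b, c` there exist real `α, β, γ` such that
`exp(−i a X⊗X) exp(−i b Z⊗I) exp(−i c X⊗X)
  = exp(−i α Z⊗I) exp(−i β X⊗X) exp(−i γ Z⊗I)`. -/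
theorem tfim_turnover (a b c : ℝ) :
    ∃ α β γ : ℝ,
      expm ((-Complex.I * (a : ℂ)) • (PauliX ⊗ₖ PauliX)) *
      expm ((-Complex.I * (b : ℂ)) • (PauliZ ⊗ₖ I2)) *
      expm ((-Complex.I * (c : ℂ)) • (PauliX ⊗ₖ PauliX)) =
      expm ((-Complex.I * (α : ℂ)) • (PauliZ ⊗ₖ I2)) *
      expm ((-Complex.I * (β : ℂ)) • (PauliX ⊗ₖ PauliX)) *
      expm ((-Complex.I * (γ : ℂ)) • (PauliZ ⊗ₖ I2)) := by
  obtain ⟨α, β, γ, E1, E2, E3, E4⟩ := tfim_angles a b c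
  refine ⟨α, β, γ, ?_⟩
  have hA := tfim_XX_mul_XX
  have hB := tfim_ZI_mul_ZI
  have hBA := tfim_ZI_mul_XX
  have hAB : (PauliX ⊗ₖ PauliX) * (PauliZ ⊗ₖ I2)
      = -((PauliZ ⊗ₖ I2) * (PauliX ⊗ₖ PauliX)) := by
    rw [hBA, neg_neg]
  rw [tfim_exp_involution _ hA (a : ℂ), tfim_exp_involution _ hB (b : ℂ),
    tfim_exp_involution _ hA (c : ℂ), tfim_exp_involution _ hB (α : ℂ),
    tfim_exp_involution _ hA (β : ℂ), tfim_exp_involution _ hB (γ : ℂ)]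
  rw [tfim_expand3 _ _ hA hBA, tfim_expand3 _ _ hB hAB]
  rw [hBA]
  have E1' : (Real.cos β : ℂ) * (Real.cos α * Real.cos γ - Real.sin α * Real.sin γ)
      = (Real.cos b : ℂ) * (Real.cos a * Real.cos c - Real.sin a * Real.sin c) := by
    rw [Real.cos_add, Real.cos_add] at E1
    exact_mod_cast E1
  have E2' : (Real.sin β : ℂ) * (Real.cos α * Real.cos γ + Real.sin α * Real.sin γ)
      = (Real.cos b : ℂ) * (Real.sin a * Real.cos c + Real.cos a * Real.sin c) := by
    rw [Real.cos_sub] at E2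
    rw [Real.sin_add] at E2
    exact_mod_cast E2
  have E3' : (Real.cos β : ℂ) * (Real.sin α * Real.cos γ + Real.cos α * Real.sin γ)
      = (Real.sin b : ℂ) * (Real.cos a * Real.cos c + Real.sin a * Real.sin c) := by
    rw [Real.sin_add] at E3
    rw [Real.cos_sub] at E3
    exact_mod_cast E3
  have E4' : (Real.sin β : ℂ) * (Real.sin α * Real.cos γ - Real.cos α * Real.sin γ)
      = -((Real.sin b : ℂ) * (Real.sin a * Real.cos c - Real.cos a * Real.sin c)) := by
    rw [Real.sin_sub] at E4
    rw [Real.sin_sub] at E4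
    exact_mod_cast E4
  match_scalars
  · linear_combination (norm := (push_cast; ring_nf; try simp [Complex.I_sq, tfim_I_cubed]; try ring_nf)) (-1 : ℂ) * E1'
  · linear_combination (norm := (push_cast; ring_nf; try simp [Complex.I_sq, tfim_I_cubed]; try ring_nf)) Complex.I * E2'
  · linear_combination (norm := (push_cast; ring_nf; try simp [Complex.I_sq, tfim_I_cubed]; try ring_nf)) Complex.I * E3'
  · linear_combination (norm := (push_cast; ring_nf; try simp [Complex.I_sq, tfim_I_cubed]; try ring_nf)) (-1 : ℂ) * E4'

end
end

section
/- Define, for real parameters (a, b, c, d, f, g), the 4×4 complex matrix G(a,b,c,d,f,g) := exp(−i·a·(Z ⊗ I)) · exp(−i·b·(I ⊗ Z)) · exp(−i·c·(X ⊗ X)) · exp(−i·d·(Y ⊗ Y)) · exp(−i·f·(Z ⊗ I)) · exp(−i·g·(I ⊗ Z)). Then for any two real parameter tuples (a, b, c, d, f, g) and (a', b', c', d', f', g') there exists a real parameter tuple (a'', b'', c'', d'', f'', g'') such that G(a,b,c,d,f,g) · G(a',b',c',d',f',g') = G(a'',b'',c'',d'',f'',g''). This is the fusion property for the blocks of the transverse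 field XY model. -/
open Matrix
open scoped Kronecker

noncomputable section

/-- The Pauli matrix `Y`. -/
def PauliY : Matrix (Fin 2) (Fin 2) ℂ := !![0, -Complex.I; Complex.I, 0]

/-- The TFXY block
`G(a,b,c,d,f,g) = exp(−i a Z⊗I) exp(−i b I⊗Z) exp(−i c X⊗X) exp(−i d Y⊗Y)
  exp(−i f Z⊗I) exp(−i g I⊗Z)`. -/
def G (a b c d f g : ℝ) : Matrix (Fin 2 × Fin 2) (Fin 2 × Fin 2) ℂ :=
  expm ((-Complex.I * (a : ℂ)) • (PauliZ ⊗ₖ I2)) *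
  expm ((-Complex.I * (b : ℂ)) • (I2 ⊗ₖ PauliZ)) *
  expm ((-Complex.I * (c : ℂ)) • (PauliX ⊗ₖ PauliX)) *
  expm ((-Complex.I * (d : ℂ)) • (PauliY ⊗ₖ PauliY)) *
  expm ((-Complex.I * (f : ℂ)) • (PauliZ ⊗ₖ I2)) *
  expm ((-Complex.I * (g : ℂ)) • (I2 ⊗ₖ PauliZ))

namespace TFXY

/-- reindexing equiv sending `(i,j)` to `(i, i+j)` (self-inverse). -/
def e2 : (Fin 2 × Fin 2) ≃ (Fin 2 × Fin 2) where
  toFun p := (p.1, p.1 + p.2)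
  invFun p := (p.1, p.1 + p.2)
  left_inv p := by fin_cases p <;> rfl
  right_inv p := by fin_cases p <;> rfl

/-- X-shaped block matrix: `A` on the even-parity block, `B` on the odd one. -/
def blk (A B : Matrix (Fin 2) (Fin 2) ℂ) : Matrix (Fin 2 × Fin 2) (Fin 2 × Fin 2) ℂ :=
  Matrix.reindex e2 e2 (Matrix.blockDiagonal ![A, B])

lemma blk_mul (A B A' B' : Matrix (Fin 2) (Fin 2) ℂ) :
    blk A B * blk A' B' = blk (A * A') (B * B') := by
  unfold blk
  simp only [reindex_apply]
  rw [submatrix_mul_equiv, ← blockDiagonal_mul]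
  have h : (fun k => ![A, B] k * ![A', B'] k) = ![A * A', B * B'] := by
    funext i; fin_cases i <;> rfl
  rw [h]

lemma blk_smul (s : ℂ) (A B : Matrix (Fin 2) (Fin 2) ℂ) :
    s • blk A B = blk (s • A) (s • B) := by
  unfold blk
  simp only [reindex_apply]
  have h : ![s • A, s • B] = s • ![A, B] := by
    funext i; fin_cases i <;> rfl
  rw [h, Matrix.blockDiagonal_smul]
  rfl

lemma exp_blk (A B : Matrix (Fin 2) (Fin 2) ℂ) :
    NormedSpace.exp (blk A B) = blk (NormedSpace.exp A) (NormedSpace.exp B) := by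
  letI : SeminormedRing (Matrix (Fin 2 × Fin 2) (Fin 2 × Fin 2) ℂ) := Matrix.linftyOpSemiNormedRing
  letI : NormedRing (Matrix (Fin 2 × Fin 2) (Fin 2 × Fin 2) ℂ) := Matrix.linftyOpNormedRing
  letI : NormedAlgebra ℂ (Matrix (Fin 2 × Fin 2) (Fin 2 × Fin 2) ℂ) := Matrix.linftyOpNormedAlgebra
  letI : NormedAlgebra ℚ (Matrix (Fin 2 × Fin 2) (Fin 2 × Fin 2) ℂ) := .restrictScalars ℚ ℂ _
  have hcont : Continuous (Matrix.reindexAlgEquiv ℂ ℂ e2) :=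
    LinearMap.continuous_of_finiteDimensional
      (Matrix.reindexAlgEquiv ℂ ℂ e2).toLinearMap
  unfold blk
  rw [← Matrix.reindexAlgEquiv_apply ℂ ℂ e2]
  erw [← NormedSpace.map_exp (Matrix.reindexAlgEquiv ℂ ℂ e2) hcont]
  rw [Matrix.reindexAlgEquiv_apply ℂ ℂ e2]
  erw [Matrix.exp_blockDiagonal]
  have h : NormedSpace.exp ![A, B] = ![NormedSpace.exp A, NormedSpace.exp B] := by
    letI : SeminormedRing (Matrix (Fin 2) (Fin 2) ℂ) := Matrix.linftyOpSemiNormedRing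
    letI : NormedRing (Matrix (Fin 2) (Fin 2) ℂ) := Matrix.linftyOpNormedRing
    letI : NormedAlgebra ℂ (Matrix (Fin 2) (Fin 2) ℂ) := Matrix.linftyOpNormedAlgebra
    letI : NormedAlgebra ℚ (Matrix (Fin 2) (Fin 2) ℂ) := .restrictScalars ℚ ℂ _
    funext i; fin_cases i <;> erw [Pi.coe_exp] <;> rfl
  erw [h]

lemma kron_ZI : PauliZ ⊗ₖ I2 = blk PauliZ PauliZ := by
  ext p q
  fin_cases p <;> fin_cases q <;>
    simp [blk, e2, Matrix.blockDiagonal_apply, PauliZ, I2, Matrix.one_apply,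
      Matrix.kroneckerMap_apply]

lemma kron_IZ : I2 ⊗ₖ PauliZ = blk PauliZ (-PauliZ) := by
  ext p q
  fin_cases p <;> fin_cases q <;>
    simp [blk, e2, Matrix.blockDiagonal_apply, PauliZ, I2, Matrix.one_apply,
      Matrix.kroneckerMap_apply]

lemma kron_XX : PauliX ⊗ₖ PauliX = blk PauliX PauliX := by
  ext p q
  fin_cases p <;> fin_cases q <;>
    simp [blk, e2, Matrix.blockDiagonal_apply, PauliX,
      Matrix.kroneckerMap_apply]

lemma kron_YY : PauliY ⊗ₖ PauliY = blk (-PauliX) PauliX := by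
  ext p q
  fin_cases p <;> fin_cases q <;>
    simp [blk, e2, Matrix.blockDiagonal_apply, PauliX, PauliY,
      Matrix.kroneckerMap_apply, Complex.I_mul_I] <;> ring_nf <;>
    simp [Complex.I_sq]

/-- `exp (-i t Z)`. -/
def Dz (t : ℝ) : Matrix (Fin 2) (Fin 2) ℂ :=
  !![Complex.exp (-(Complex.I * t)), 0; 0, Complex.exp (Complex.I * t)]

/-- `exp (-i t X)`. -/
def Ex (t : ℝ) : Matrix (Fin 2) (Fin 2) ℂ :=
  !![(Real.cos t : ℂ), -Complex.I * Real.sin t; -Complex.I * Real.sin t, (Real.cos t : ℂ)]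

lemma exp_Z (t : ℝ) :
    NormedSpace.exp ((-Complex.I * (t : ℂ)) • PauliZ) = Dz t := by
  have h : (-Complex.I * (t : ℂ)) • PauliZ =
      Matrix.diagonal ![-(Complex.I * t), Complex.I * t] := by
    ext i j
    fin_cases i <;> fin_cases j <;>
      simp [PauliZ, Matrix.diagonal] <;> ring
  rw [h, Matrix.exp_diagonal]
  have h2 : NormedSpace.exp ![-(Complex.I * (t:ℂ)), Complex.I * t] =
      ![Complex.exp (-(Complex.I * t)), Complex.exp (Complex.I * t)] := by
    funext i
    fin_cases i <;> simp [Pi.coe_exp, Complex.exp_eq_exp_ℂ]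
  rw [h2]
  ext i j
  fin_cases i <;> fin_cases j <;> simp [Dz, Matrix.diagonal]

lemma exp_X (t : ℝ) :
    NormedSpace.exp ((-Complex.I * (t : ℂ)) • PauliX) = Ex t := by
  set U : Matrix (Fin 2) (Fin 2) ℂ := !![1, 1; 1, -1] with hU
  set V : Matrix (Fin 2) (Fin 2) ℂ := !![1/2, 1/2; 1/2, -(1/2)] with hV
  have hUV : U * V = 1 := by
    ext i j
    fin_cases i <;> fin_cases j <;>
      simp [hU, hV, Matrix.mul_apply, Fin.sum_univ_succ, Matrix.one_apply] <;> norm_num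
  have hVU : V * U = 1 := by
    ext i j
    fin_cases i <;> fin_cases j <;>
      simp [hU, hV, Matrix.mul_apply, Fin.sum_univ_succ, Matrix.one_apply] <;> norm_num
  have hUu : IsUnit U := ⟨⟨U, V, hUV, hVU⟩, rfl⟩
  have hUinv : U⁻¹ = V := Matrix.inv_eq_right_inv hUV
  have hconj : (-Complex.I * (t : ℂ)) • PauliX = U * ((-Complex.I * (t : ℂ)) • PauliZ) * U⁻¹ := by
    rw [hUinv]
    ext i j
    fin_cases i <;> fin_cases j <;>
      simp [hU, hV, PauliX, PauliZ, Matrix.mul_apply, Fin.sum_univ_succ] <;> ring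
  rw [hconj, Matrix.exp_conj U _ hUu, exp_Z, hUinv]
  ext i j
  have e1 : Complex.exp (-(Complex.I * (t:ℂ))) = Complex.cos t - Complex.sin t * Complex.I := by
    rw [show -(Complex.I * (t:ℂ)) = (-(t:ℂ)) * Complex.I by ring, Complex.exp_mul_I]
    simp [sub_eq_add_neg]
  have e2 : Complex.exp (Complex.I * (t:ℂ)) = Complex.cos t + Complex.sin t * Complex.I := by
    rw [show (Complex.I * (t:ℂ)) = ((t:ℂ)) * Complex.I by ring, Complex.exp_mul_I]
  fin_cases i <;> fin_cases j <;>
    simp [hU, hV, Dz, Ex, Matrix.mul_apply, Fin.sum_univ_succ, e1, e2,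
      Complex.ofReal_cos, Complex.ofReal_sin, sub_eq_add_neg] <;> ring_nf
lemma Dz_mul (s t : ℝ) : Dz s * Dz t = Dz (s + t) := by
  ext i j
  fin_cases i <;> fin_cases j <;>
    simp [Dz, Matrix.mul_apply, Fin.sum_univ_succ, ← Complex.exp_add] <;>
    push_cast <;> ring_nf

lemma Ex_mul (s t : ℝ) : Ex s * Ex t = Ex (s + t) := by
  ext i j
  fin_cases i <;> fin_cases j <;>
    simp [Ex, Matrix.mul_apply, Fin.sum_univ_succ, Real.cos_add, Real.sin_add] <;>
    push_cast <;> ring_nf <;> simp [Complex.I_sq] <;> ring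

/-- Euler `Z X Z` block. -/
def E (α β γ : ℝ) : Matrix (Fin 2) (Fin 2) ℂ := Dz α * Ex β * Dz γ

lemma G_eq (a b c d f g : ℝ) :
    G a b c d f g = blk (E (a + b) (c - d) (f + g)) (E (a - b) (c + d) (f - g)) := by
  have h1 : expm ((-Complex.I * (a : ℂ)) • (PauliZ ⊗ₖ I2)) = blk (Dz a) (Dz a) := by
    rw [expm, kron_ZI, blk_smul, exp_blk, exp_Z]
  have h5 : expm ((-Complex.I * (f : ℂ)) • (PauliZ ⊗ₖ I2)) = blk (Dz f) (Dz f) := by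
    rw [expm, kron_ZI, blk_smul, exp_blk, exp_Z]
  have hZneg : ∀ t : ℝ, NormedSpace.exp ((-Complex.I * (t : ℂ)) • (-PauliZ)) = Dz (-t) := by
    intro t
    have : (-Complex.I * (t : ℂ)) • (-PauliZ) = (-Complex.I * ((-t : ℝ) : ℂ)) • PauliZ := by
      rw [smul_neg, ← neg_smul]; congr 1; push_cast; ring
    rw [this, exp_Z]
  have h2 : expm ((-Complex.I * (b : ℂ)) • (I2 ⊗ₖ PauliZ)) = blk (Dz b) (Dz (-b)) := by
    rw [expm, kron_IZ, blk_smul, exp_blk, exp_Z, hZneg]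
  have h6 : expm ((-Complex.I * (g : ℂ)) • (I2 ⊗ₖ PauliZ)) = blk (Dz g) (Dz (-g)) := by
    rw [expm, kron_IZ, blk_smul, exp_blk, exp_Z, hZneg]
  have h3 : expm ((-Complex.I * (c : ℂ)) • (PauliX ⊗ₖ PauliX)) = blk (Ex c) (Ex c) := by
    rw [expm, kron_XX, blk_smul, exp_blk, exp_X]
  have hXneg : ∀ t : ℝ, NormedSpace.exp ((-Complex.I * (t : ℂ)) • (-PauliX)) = Ex (-t) := by
    intro t
    have : (-Complex.I * (t : ℂ)) • (-PauliX) = (-Complex.I * ((-t : ℝ) : ℂ)) • PauliX := by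
      rw [smul_neg, ← neg_smul]; congr 1; push_cast; ring
    rw [this, exp_X]
  have h4 : expm ((-Complex.I * (d : ℂ)) • (PauliY ⊗ₖ PauliY)) = blk (Ex (-d)) (Ex d) := by
    rw [expm, kron_YY, blk_smul, exp_blk, exp_X, hXneg]
  rw [G, h1, h2, h3, h4, h5, h6, blk_mul, blk_mul, blk_mul, blk_mul, blk_mul]
  have c1 : Dz a * Dz b * Ex c * Ex (-d) * Dz f * Dz g = E (a + b) (c - d) (f + g) := by
    rw [E, Dz_mul, mul_assoc (Dz (a + b)), Ex_mul, mul_assoc (Dz (a + b) * Ex (c + -d)), Dz_mul]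
    norm_num [sub_eq_add_neg]
  have c2 : Dz a * Dz (-b) * Ex c * Ex d * Dz f * Dz (-g) = E (a - b) (c + d) (f - g) := by
    rw [E, Dz_mul, mul_assoc (Dz (a + -b)), Ex_mul, mul_assoc (Dz (a + -b) * Ex (c + d)), Dz_mul]
    norm_num [sub_eq_add_neg]
  rw [c1, c2]
/-- An `SU(2)`-shaped matrix. -/
def su (u v : ℂ) : Matrix (Fin 2) (Fin 2) ℂ :=
  !![u, v; -(starRingEnd ℂ) v, (starRingEnd ℂ) u]

def uE (α β γ : ℝ) : ℂ :=
  (Real.cos β : ℂ) * Complex.exp (-(Complex.I * α)) * Complex.exp (-(Complex.I * γ))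
def vE (α β γ : ℝ) : ℂ :=
  -Complex.I * (Real.sin β : ℂ) * Complex.exp (-(Complex.I * α)) * Complex.exp (Complex.I * γ)

lemma E_eq_su (α β γ : ℝ) : E α β γ = su (uE α β γ) (vE α β γ) := by
  ext i j
  fin_cases i <;> fin_cases j <;>
    simp [E, su, uE, vE, Dz, Ex, Matrix.mul_apply, Fin.sum_univ_succ,
      _root_.map_mul, map_neg, Complex.conj_I, Complex.conj_ofReal,
      ← Complex.exp_conj, ← Complex.ofReal_cos, ← Complex.ofReal_sin] <;>
    ring_nf
lemma su_mul (u v u' v' : ℂ) :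
    su u v * su u' v' =
      su (u * u' - v * (starRingEnd ℂ) v') (u * v' + v * (starRingEnd ℂ) u') := by
  ext i j
  fin_cases i <;> fin_cases j <;>
    simp [su, Matrix.mul_apply, Fin.sum_univ_succ, map_add, _root_.map_mul, map_sub,
      Complex.conj_conj] <;>
    ring

lemma su_norm_mul {u v u' v' : ℂ}
    (hu : u * (starRingEnd ℂ) u + v * (starRingEnd ℂ) v = 1)
    (hu' : u' * (starRingEnd ℂ) u' + v' * (starRingEnd ℂ) v' = 1) :
    (u * u' - v * (starRingEnd ℂ) v') * (starRingEnd ℂ) (u * u' - v * (starRingEnd ℂ) v') +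
      (u * v' + v * (starRingEnd ℂ) u') *
        (starRingEnd ℂ) (u * v' + v * (starRingEnd ℂ) u') = 1 := by
  simp only [_root_.map_mul, map_add, map_sub, Complex.conj_conj]
  linear_combination (u' * (starRingEnd ℂ) u' + v' * (starRingEnd ℂ) v') * hu + hu'

lemma E_norm (α β γ : ℝ) :
    uE α β γ * (starRingEnd ℂ) (uE α β γ) + vE α β γ * (starRingEnd ℂ) (vE α β γ) = 1 := by
  simp only [uE, vE, _root_.map_mul, map_neg, Complex.conj_I, Complex.conj_ofReal,
    ← Complex.exp_conj]
  have mα : Complex.exp (-(Complex.I * (α : ℂ))) *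
      Complex.exp (-(-Complex.I * (α : ℂ))) = 1 := by
    rw [← Complex.exp_add, show -(Complex.I * (α : ℂ)) + -(-Complex.I * (α : ℂ)) = 0 by ring]
    exact Complex.exp_zero
  have mγ : Complex.exp (-(Complex.I * (γ : ℂ))) *
      Complex.exp (-(-Complex.I * (γ : ℂ))) = 1 := by
    rw [← Complex.exp_add, show -(Complex.I * (γ : ℂ)) + -(-Complex.I * (γ : ℂ)) = 0 by ring]
    exact Complex.exp_zero
  have mγ' : Complex.exp (Complex.I * (γ : ℂ)) *
      Complex.exp (-Complex.I * (γ : ℂ)) = 1 := by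
    rw [← Complex.exp_add, show Complex.I * (γ : ℂ) + -Complex.I * (γ : ℂ) = 0 by ring]
    exact Complex.exp_zero
  have key : ((Real.cos β : ℂ))^2 + ((Real.sin β : ℂ))^2 = 1 := by
    have := Real.cos_sq_add_sin_sq β; exact_mod_cast this
  linear_combination
    ((Real.cos β : ℂ))^2 * (Complex.exp (-(Complex.I * (γ : ℂ))) *
      Complex.exp (-(-Complex.I * (γ : ℂ)))) * mα +
    ((Real.cos β : ℂ))^2 * mγ -
    Complex.I^2 * ((Real.sin β : ℂ))^2 * (Complex.exp (Complex.I * (γ : ℂ)) *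
      Complex.exp (-Complex.I * (γ : ℂ))) * mα -
    Complex.I^2 * ((Real.sin β : ℂ))^2 * mγ' +
    key - ((Real.sin β : ℂ))^2 * Complex.I_mul_I

lemma su_decomp (u v : ℂ)
    (h : u * (starRingEnd ℂ) u + v * (starRingEnd ℂ) v = 1) :
    ∃ α β γ : ℝ, E α β γ = su u v := by
  have hre : ‖u‖ ^ 2 + ‖v‖ ^ 2 = 1 := by
    rw [Complex.mul_conj, Complex.mul_conj] at h
    have h2 : Complex.normSq u + Complex.normSq v = 1 := by exact_mod_cast h
    simpa [Complex.sq_norm] using h2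
  have hu0 : 0 ≤ ‖u‖ := norm_nonneg u
  have hv0 : 0 ≤ ‖v‖ := norm_nonneg v
  have hu1 : ‖u‖ ≤ 1 := by nlinarith
  set α : ℝ := (-Complex.arg u + (-Complex.arg v - Real.pi/2))/2 with hα
  set γ : ℝ := (-Complex.arg u - (-Complex.arg v - Real.pi/2))/2 with hγ
  set β : ℝ := Real.arccos (‖u‖) with hβ
  have hcos : Real.cos β = ‖u‖ := Real.cos_arccos (by nlinarith) hu1
  have hsin : Real.sin β = ‖v‖ := by
    rw [hβ, Real.sin_arccos, show 1 - ‖u‖ ^ 2 = ‖v‖ ^ 2 by linarith]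
    exact Real.sqrt_sq hv0
  refine ⟨α, β, γ, ?_⟩
  rw [E_eq_su]
  have hU : uE α β γ = u := by
    rw [uE, hcos, mul_assoc, ← Complex.exp_add]
    rw [show -(Complex.I * (α : ℂ)) + -(Complex.I * (γ : ℂ)) =
        (Complex.arg u : ℂ) * Complex.I by
      rw [hα, hγ]; push_cast; ring]
    exact Complex.norm_mul_exp_arg_mul_I u
  have hV : vE α β γ = v := by
    rw [vE, hsin, mul_assoc, ← Complex.exp_add]
    rw [show -(Complex.I * (α : ℂ)) + Complex.I * (γ : ℂ) =
        (Complex.arg v : ℂ) * Complex.I + ((Real.pi : ℂ)/2) * Complex.I by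
      rw [hα, hγ]; push_cast; ring]
    rw [Complex.exp_add]
    have hI2 : Complex.exp ((Real.pi : ℂ)/2 * Complex.I) = Complex.I := by
      rw [Complex.exp_mul_I]
      simp [Complex.cos_pi_div_two, Complex.sin_pi_div_two]
    rw [hI2]
    have habs := Complex.norm_mul_exp_arg_mul_I v
    linear_combination (-Complex.I * Complex.I) * habs - v * Complex.I_mul_I
  rw [hU, hV]

lemma E_fusion (α β γ α' β' γ' : ℝ) :
    ∃ A B C : ℝ, E α β γ * E α' β' γ' = E A B C := by
  rw [E_eq_su α β γ, E_eq_su α' β' γ', su_mul]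
  obtain ⟨A, B, C, hE⟩ := su_decomp _ _ (su_norm_mul (E_norm α β γ) (E_norm α' β' γ'))
  exact ⟨A, B, C, hE.symm⟩

end TFXY

/-- **Fusion property for the transverse field XY model blocks.**
The product of any two TFXY blocks is again a TFXY block. -/
theorem tfxy_fusion (a b c d f g a' b' c' d' f' g' : ℝ) :
    ∃ a'' b'' c'' d'' f'' g'' : ℝ,
      G a b c d f g * G a' b' c' d' f' g' = G a'' b'' c'' d'' f'' g'' := by
  rw [TFXY.G_eq, TFXY.G_eq, TFXY.blk_mul]
  obtain ⟨A1, B1, C1, h1⟩ := TFXY.E_fusion (a+b) (c-d) (f+g) (a'+b') (c'-d') (f'+g')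
  obtain ⟨A2, B2, C2, h2⟩ := TFXY.E_fusion (a-b) (c+d) (f-g) (a'-b') (c'+d') (f'-g')
  refine ⟨(A1+A2)/2, (A1-A2)/2, (B1+B2)/2, (B2-B1)/2, (C1+C2)/2, (C1-C2)/2, ?_⟩
  rw [TFXY.G_eq, h1, h2]
  rw [show (A1+A2)/2 + (A1-A2)/2 = A1 by ring, show (B1+B2)/2 - (B2-B1)/2 = B1 by ring,
    show (C1+C2)/2 + (C1-C2)/2 = C1 by ring, show (A1+A2)/2 - (A1-A2)/2 = A2 by ring,
    show (B1+B2)/2 + (B2-B1)/2 = B2 by ring, show (C1+C2)/2 - (C1-C2)/2 = C2 by ring]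


end
end
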